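/- Let Φ be a 3-CNF formula and P^Φ its associated disjunctive program. Then Φ is satisfiable if and only if P^Φ is not HEF. -/

import Mathlib

structure Rule (α : Type) where
  B : Finset α
  F : Finset α
  H : Finset α

variable {α : Type}

/-- Z is outbound in Y for program P. -/
def Outbound [DecidableEq α] (P : Set (Rule α)) (Y Z : Finset α) : Prop :=
  ∃ r ∈ P, (r.H ∩ Z).Nonempty ∧ (r.B ∩ (Y \ Z)).Nonempty ∧
    r.B ∩ Z = ∅ ∧ r.H ∩ (Y \ Z) = ∅

/-- Y is an elementary set for P. -/
def Elementary [DecidableEq α] (P : Set (Rule α)) (Y : Finset α) : Prop :=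
  Y.Nonempty ∧ ∀ Z : Finset α, Z ⊂ Y → Z.Nonempty → Outbound P Y Z

/-- X is a disjunctive set for P. -/
def DisjSet [DecidableEq α] (P : Set (Rule α)) (X : Finset α) : Prop :=
  ∃ r ∈ P, 1 < (r.H ∩ X).card

/-- The projection P_X of P on a set X of atoms. -/
def proj [DecidableEq α] (P : Set (Rule α)) (X : Finset α) : Set (Rule α) :=
  {r' | ∃ r ∈ P, (r.B ∩ X).Nonempty ∧ (r.H ∩ X).Nonempty ∧
        r' = ⟨r.B ∩ X, ∅, r.H ∩ X⟩}

/-- P is head-elementary-set-free. -/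
def HEF [DecidableEq α] (P : Set (Rule α)) : Prop :=
  ∀ r ∈ P, ∀ E : Finset α, Elementary P E → (E ∩ r.H).card ≤ 1

/-- Atoms of the program `P^Φ`. -/
inductive Atom : Type
  | phi : Atom
  | a : ℕ → Atom
  | na : ℕ → Atom
  | c : ℕ → Atom
deriving DecidableEq

/-- The atom opposite to a literal (variable index, sign). -/
def oppAtom : ℕ × Bool → Atom
  | (v, true) => Atom.na v
  | (v, false) => Atom.a v

/-- The atom corresponding to a literal. -/
def litAtom : ℕ × Bool → Atom
  | (v, true) => Atom.a v
  | (v, false) => Atom.na v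

/-- NV(c_i): opposites of the atoms of the literals of clause C_i. -/
def NV (C : ℕ → Fin 3 → ℕ × Bool) (i : ℕ) : Finset Atom :=
  {oppAtom (C i 0), oppAtom (C i 1), oppAtom (C i 2)}

/-- The program `P^Φ` associated with a 3-CNF with m variables `A_1,…,A_m`
and n clauses `C_1,…,C_n`, the clauses given by `C`. -/
def PPhi (m n : ℕ) (C : ℕ → Fin 3 → ℕ × Bool) : Set (Rule Atom) :=
  ({⟨{Atom.phi}, ∅, {Atom.c 0, Atom.c (n+1)}⟩,
    ⟨{Atom.c 0}, ∅, {Atom.c 1}⟩,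
    ⟨{Atom.c (n+1), Atom.na 1}, ∅, {Atom.a 1}⟩,
    ⟨{Atom.c (n+1), Atom.a 1}, ∅, {Atom.na 1}⟩,
    ⟨{Atom.a m, Atom.na m}, ∅, {Atom.c 0}⟩} : Set (Rule Atom)) ∪
  {r | ∃ i ∈ Finset.Icc 1 n, ∃ α ∈ NV C i,
        r = ⟨{Atom.c i, α}, ∅, {Atom.c (i+1)}⟩} ∪
  {r | ∃ i ∈ Finset.Icc 1 (m-1),
        r = ⟨{Atom.a i, Atom.na (i+1)}, ∅, {Atom.a (i+1)}⟩ ∨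
        r = ⟨{Atom.a i, Atom.a (i+1)}, ∅, {Atom.na (i+1)}⟩ ∨
        r = ⟨{Atom.na i, Atom.na (i+1)}, ∅, {Atom.a (i+1)}⟩ ∨
        r = ⟨{Atom.na i, Atom.a (i+1)}, ∅, {Atom.na (i+1)}⟩}

/-- All variable indices mentioned by clauses 1..n lie in [1,m]. -/
def ValidCNF (m n : ℕ) (C : ℕ → Fin 3 → ℕ × Bool) : Prop :=
  ∀ i ∈ Finset.Icc 1 n, ∀ j : Fin 3, (C i j).1 ∈ Finset.Icc 1 m

/-- Truth assignment X satisfies the 3-CNF. -/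
def Sat (n : ℕ) (C : ℕ → Fin 3 → ℕ × Bool) (X : ℕ → Bool) : Prop :=
  ∀ i ∈ Finset.Icc 1 n, ∃ j : Fin 3, X (C i j).1 = (C i j).2

lemma cycle_elementary [DecidableEq α] (P : Set (Rule α)) (N : ℕ) (hN : 0 < N)
    (e : ℕ → α) (E : Finset α)
    (hE : ∀ x, x ∈ E ↔ ∃ k, k < N ∧ e k = x)
    (hedge : ∀ k, k < N → ∃ r ∈ P, e ((k+1) % N) ∈ r.H ∧
        (∀ x ∈ r.H, x ∈ E → x = e ((k+1) % N))
        ∧ e k ∈ r.B ∧ (∀ x ∈ r.B, x ∈ E → x = e k)) :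
    Elementary P E := by
  constructor
  · exact ⟨e 0, (hE _).2 ⟨0, hN, rfl⟩⟩
  intro Z hZ hZne
  obtain ⟨z, hz⟩ := hZne
  have hzE : z ∈ E := hZ.1 hz
  obtain ⟨w, hwE, hwZ⟩ := Finset.exists_of_ssubset hZ
  obtain ⟨i, hi, hei⟩ := (hE z).1 hzE
  obtain ⟨j, hj, hej⟩ := (hE w).1 hwE
  have hPex : ∃ d, e ((j + d) % N) ∈ Z := by
    refine ⟨i + N - j, ?_⟩
    have h1 : j + (i + N - j) = i + N := by omega
    rw [h1, Nat.add_mod_right, Nat.mod_eq_of_lt hi, hei]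
    exact hz
  classical
  have hdZ : e ((j + Nat.find hPex) % N) ∈ Z := Nat.find_spec hPex
  have hd0 : Nat.find hPex ≠ 0 := by
    intro h
    rw [h] at hdZ
    simp only [Nat.add_zero] at hdZ
    rw [Nat.mod_eq_of_lt hj, hej] at hdZ
    exact hwZ hdZ
  obtain ⟨d', hd'⟩ : ∃ d', Nat.find hPex = d' + 1 := ⟨Nat.find hPex - 1, by omega⟩
  rw [hd'] at hdZ
  have hprev : e ((j + d') % N) ∉ Z := Nat.find_min hPex (by omega)
  set k := (j + d') % N with hk
  have hkN : k < N := Nat.mod_lt _ hN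
  have hsucc : (k + 1) % N = (j + (d' + 1)) % N := by
    rw [hk, Nat.mod_add_mod, ← Nat.add_assoc]
  obtain ⟨r, hrP, hH1, hH2, hB1, hB2⟩ := hedge k hkN
  refine ⟨r, hrP, ⟨e ((k+1) % N), ?_⟩, ⟨e k, ?_⟩, ?_, ?_⟩
  · rw [Finset.mem_inter]
    exact ⟨hH1, by rw [hsucc]; exact hdZ⟩
  · rw [Finset.mem_inter, Finset.mem_sdiff]
    exact ⟨hB1, (hE _).2 ⟨k, hkN, rfl⟩, hprev⟩
  · rw [Finset.eq_empty_iff_forall_notMem]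
    intro x hx
    rw [Finset.mem_inter] at hx
    have := hB2 x hx.1 (hZ.1 hx.2)
    rw [this] at hx
    exact hprev hx.2
  · rw [Finset.eq_empty_iff_forall_notMem]
    intro x hx
    rw [Finset.mem_inter, Finset.mem_sdiff] at hx
    have := hH2 x hx.1 hx.2.1
    rw [this] at hx
    rw [hsucc] at hx
    exact hx.2.2 hdZ

lemma litAtom_ne_c (v : ℕ) (b : Bool) (k : ℕ) : litAtom (v, b) ≠ Atom.c k := by
  cases b <;> simp [litAtom]

lemma litAtom_inj {v w : ℕ} {b c : Bool} (h : litAtom (v, b) = litAtom (w, c)) :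
    v = w ∧ b = c := by
  cases b <;> cases c <;> simp [litAtom] at h <;> simp [h]

/-- the cycle of atoms -/
def eA (n : ℕ) (X : ℕ → Bool) (k : ℕ) : Atom :=
  if k ≤ n+1 then Atom.c k else litAtom (k - (n+1), X (k - (n+1)))

def EA (m n : ℕ) (X : ℕ → Bool) : Finset Atom := (Finset.range (n+2+m)).image (eA n X)

lemma mem_EA (m n : ℕ) (X : ℕ → Bool) (x : Atom) :
    x ∈ EA m n X ↔ ∃ k, k < n+2+m ∧ eA n X k = x := by
  simp [EA, Finset.mem_image, Finset.mem_range]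

lemma lit_notin_EA (m n : ℕ) (X : ℕ → Bool) (v : ℕ) (b : Bool) (hvb : X v ≠ b) :
    litAtom (v, b) ∉ EA m n X := by
  intro hmem
  rw [mem_EA] at hmem
  obtain ⟨k, hk, hek⟩ := hmem
  by_cases h : k ≤ n+1
  · rw [eA, if_pos h] at hek
    exact litAtom_ne_c v b k hek.symm
  · rw [eA, if_neg h] at hek
    obtain ⟨h1, h2⟩ := litAtom_inj hek
    exact hvb (h1 ▸ h2)


lemma oppAtom_eq (p : ℕ × Bool) : oppAtom p = litAtom (p.1, !p.2) := by
  obtain ⟨v, b⟩ := p; cases b <;> rfl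

lemma forward_edges (m n : ℕ) (hm : 1 ≤ m) (hn : 1 ≤ n) (C : ℕ → Fin 3 → ℕ × Bool)
    (X : ℕ → Bool) (hX : Sat n C X) (k : ℕ) (hk : k < n+2+m) :
    ∃ r ∈ PPhi m n C, eA n X ((k+1) % (n+2+m)) ∈ r.H ∧
      (∀ x ∈ r.H, x ∈ EA m n X → x = eA n X ((k+1) % (n+2+m))) ∧
      eA n X k ∈ r.B ∧ (∀ x ∈ r.B, x ∈ EA m n X → x = eA n X k) := by
  by_cases hlast : k = n+1+m
  · -- last edge: litAtom(m, X m) → c 0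
    have hmod : (k+1) % (n+2+m) = 0 := by
      rw [hlast, show n+1+m+1 = n+2+m by ring, Nat.mod_self]
    have he0 : eA n X 0 = Atom.c 0 := by simp [eA]
    have hsub : n+1+m - (n+1) = m := by omega
    have hek : eA n X k = litAtom (m, X m) := by
      rw [hlast, eA, if_neg (by omega), hsub]
    refine ⟨⟨{Atom.a m, Atom.na m}, ∅, {Atom.c 0}⟩,
      Set.mem_union_left _ (Set.mem_union_left _ (by simp)), ?_, ?_, ?_, ?_⟩
    · rw [hmod, he0]; simp
    · intro x hx hxE
      rw [Finset.mem_singleton] at hx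
      rw [hx, hmod, he0]
    · rw [hek]; cases hXm : X m <;> simp [litAtom]
    · intro x hx hxE
      rw [hek]
      simp only [Finset.mem_insert, Finset.mem_singleton] at hx
      cases hXm : X m
      · rcases hx with rfl | rfl
        · exact absurd hxE (by
            have := lit_notin_EA m n X m true (by rw [hXm]; simp)
            simpa [litAtom] using this)
        · simp [litAtom]
      · rcases hx with rfl | rfl
        · simp [litAtom]
        · exact absurd hxE (by
            have := lit_notin_EA m n X m false (by rw [hXm]; simp)
            simpa [litAtom] using this)
  by_cases h0 : k = 0
  · have hmod : (k+1) % (n+2+m) = 1 := by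
      rw [h0]; exact Nat.mod_eq_of_lt (by omega)
    have he0 : eA n X k = Atom.c 0 := by rw [h0]; simp [eA]
    have he1 : eA n X 1 = Atom.c 1 := by rw [eA, if_pos (by omega)]
    refine ⟨⟨{Atom.c 0}, ∅, {Atom.c 1}⟩,
      Set.mem_union_left _ (Set.mem_union_left _ (by simp)), ?_, ?_, ?_, ?_⟩
    · rw [hmod, he1]; simp
    · intro x hx hxE
      rw [Finset.mem_singleton] at hx
      rw [hx, hmod, he1]
    · rw [he0]; simp
    · intro x hx hxE
      rw [Finset.mem_singleton] at hx
      rw [hx, he0]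
  by_cases hcl : k ≤ n
  · -- clause edge: c k → c (k+1)
    have hk1 : 1 ≤ k := by omega
    have hmod : (k+1) % (n+2+m) = k+1 := Nat.mod_eq_of_lt (by omega)
    have hek : eA n X k = Atom.c k := by rw [eA, if_pos (by omega)]
    have hek1 : eA n X (k+1) = Atom.c (k+1) := by rw [eA, if_pos (by omega)]
    obtain ⟨j, hj⟩ := hX k (by rw [Finset.mem_Icc]; omega)
    have hαNV : oppAtom (C k j) ∈ NV C k := by
      fin_cases j <;> simp [NV]
    have hαnot : oppAtom (C k j) ∉ EA m n X := by
      rw [oppAtom_eq]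
      exact lit_notin_EA m n X _ _ (by rw [hj]; cases (C k j).2 <;> simp)
    refine ⟨⟨{Atom.c k, oppAtom (C k j)}, ∅, {Atom.c (k+1)}⟩,
      Set.mem_union_left _ (Set.mem_union_right _
        ⟨k, by rw [Finset.mem_Icc]; omega, oppAtom (C k j), hαNV, rfl⟩), ?_, ?_, ?_, ?_⟩
    · rw [hmod, hek1]; simp
    · intro x hx hxE
      rw [Finset.mem_singleton] at hx
      rw [hx, hmod, hek1]
    · rw [hek]; simp
    · intro x hx hxE
      simp only [Finset.mem_insert, Finset.mem_singleton] at hx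
      rcases hx with rfl | rfl
      · rw [hek]
      · exact absurd hxE hαnot
  by_cases hn1 : k = n+1
  · -- c (n+1) → litAtom (1, X 1)
    have hmod : (k+1) % (n+2+m) = n+2 := by
      rw [hn1]; exact Nat.mod_eq_of_lt (by omega)
    have hek : eA n X k = Atom.c (n+1) := by rw [hn1, eA, if_pos (by omega)]
    have hsub : n+2 - (n+1) = 1 := by omega
    have hek1 : eA n X (n+2) = litAtom (1, X 1) := by
      rw [eA, if_neg (by omega), hsub]
    cases hX1 : X 1
    · refine ⟨⟨{Atom.c (n+1), Atom.a 1}, ∅, {Atom.na 1}⟩,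
        Set.mem_union_left _ (Set.mem_union_left _ (by simp)), ?_, ?_, ?_, ?_⟩
      · rw [hmod, hek1, hX1]; simp [litAtom]
      · intro x hx hxE
        rw [Finset.mem_singleton] at hx
        rw [hx, hmod, hek1, hX1]; rfl
      · rw [hek]; simp
      · intro x hx hxE
        simp only [Finset.mem_insert, Finset.mem_singleton] at hx
        rcases hx with rfl | rfl
        · rw [hek]
        · exact absurd hxE (by
            have := lit_notin_EA m n X 1 true (by rw [hX1]; simp)
            simpa [litAtom] using this)
    · refine ⟨⟨{Atom.c (n+1), Atom.na 1}, ∅, {Atom.a 1}⟩,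
        Set.mem_union_left _ (Set.mem_union_left _ (by simp)), ?_, ?_, ?_, ?_⟩
      · rw [hmod, hek1, hX1]; simp [litAtom]
      · intro x hx hxE
        rw [Finset.mem_singleton] at hx
        rw [hx, hmod, hek1, hX1]; rfl
      · rw [hek]; simp
      · intro x hx hxE
        simp only [Finset.mem_insert, Finset.mem_singleton] at hx
        rcases hx with rfl | rfl
        · rw [hek]
        · exact absurd hxE (by
            have := lit_notin_EA m n X 1 false (by rw [hX1]; simp)
            simpa [litAtom] using this)
  · -- chain edge: litAtom (j, X j) → litAtom (j+1, X (j+1)), j = k - (n+1) ∈ [1, m-1]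
    obtain ⟨j, hjk, hj1, hjm⟩ : ∃ j, k = n+1+j ∧ 1 ≤ j ∧ j ≤ m-1 :=
      ⟨k - (n+1), by omega, by omega, by omega⟩
    have hmod : (k+1) % (n+2+m) = k+1 := Nat.mod_eq_of_lt (by omega)
    have hs1 : k - (n+1) = j := by omega
    have hs2 : k + 1 - (n+1) = j+1 := by omega
    have hek : eA n X k = litAtom (j, X j) := by
      rw [eA, if_neg (by omega), hs1]
    have hek1 : eA n X (k+1) = litAtom (j+1, X (j+1)) := by
      rw [eA, if_neg (by omega), hs2]
    have hmemIcc : j ∈ Finset.Icc 1 (m-1) := by rw [Finset.mem_Icc]; exact ⟨hj1, hjm⟩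
    have hnot : ∀ b : Bool, X (j+1) = b → litAtom (j+1, !b) ∉ EA m n X := by
      intro b hb
      exact lit_notin_EA m n X _ _ (by rw [hb]; cases b <;> simp)
    cases hXj : X j <;> cases hXj1 : X (j+1)
    · -- na j ∧ a (j+1) → na (j+1)
      refine ⟨⟨{Atom.na j, Atom.a (j+1)}, ∅, {Atom.na (j+1)}⟩,
        Set.mem_union_right _ ⟨j, hmemIcc, by simp⟩, ?_, ?_, ?_, ?_⟩
      · rw [hmod, hek1, hXj1]; simp [litAtom]
      · intro x hx hxE
        rw [Finset.mem_singleton] at hx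
        rw [hx, hmod, hek1, hXj1]; rfl
      · rw [hek, hXj]; simp [litAtom]
      · intro x hx hxE
        simp only [Finset.mem_insert, Finset.mem_singleton] at hx
        rcases hx with rfl | rfl
        · rw [hek, hXj]; rfl
        · exact absurd hxE (by simpa [litAtom] using hnot false hXj1)
    · -- na j ∧ na (j+1) → a (j+1)
      refine ⟨⟨{Atom.na j, Atom.na (j+1)}, ∅, {Atom.a (j+1)}⟩,
        Set.mem_union_right _ ⟨j, hmemIcc, by simp⟩, ?_, ?_, ?_, ?_⟩
      · rw [hmod, hek1, hXj1]; simp [litAtom]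
      · intro x hx hxE
        rw [Finset.mem_singleton] at hx
        rw [hx, hmod, hek1, hXj1]; rfl
      · rw [hek, hXj]; simp [litAtom]
      · intro x hx hxE
        simp only [Finset.mem_insert, Finset.mem_singleton] at hx
        rcases hx with rfl | rfl
        · rw [hek, hXj]; rfl
        · exact absurd hxE (by simpa [litAtom] using hnot true hXj1)
    · -- a j ∧ a (j+1) → na (j+1)
      refine ⟨⟨{Atom.a j, Atom.a (j+1)}, ∅, {Atom.na (j+1)}⟩,
        Set.mem_union_right _ ⟨j, hmemIcc, by simp⟩, ?_, ?_, ?_, ?_⟩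
      · rw [hmod, hek1, hXj1]; simp [litAtom]
      · intro x hx hxE
        rw [Finset.mem_singleton] at hx
        rw [hx, hmod, hek1, hXj1]; rfl
      · rw [hek, hXj]; simp [litAtom]
      · intro x hx hxE
        simp only [Finset.mem_insert, Finset.mem_singleton] at hx
        rcases hx with rfl | rfl
        · rw [hek, hXj]; rfl
        · exact absurd hxE (by simpa [litAtom] using hnot false hXj1)
    · -- a j ∧ na (j+1) → a (j+1)
      refine ⟨⟨{Atom.a j, Atom.na (j+1)}, ∅, {Atom.a (j+1)}⟩,
        Set.mem_union_right _ ⟨j, hmemIcc, by simp⟩, ?_, ?_, ?_, ?_⟩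
      · rw [hmod, hek1, hXj1]; simp [litAtom]
      · intro x hx hxE
        rw [Finset.mem_singleton] at hx
        rw [hx, hmod, hek1, hXj1]; rfl
      · rw [hek, hXj]; simp [litAtom]
      · intro x hx hxE
        simp only [Finset.mem_insert, Finset.mem_singleton] at hx
        rcases hx with rfl | rfl
        · rw [hek, hXj]; rfl
        · exact absurd hxE (by simpa [litAtom] using hnot true hXj1)


lemma sat_not_HEF (m n : ℕ) (hm : 1 ≤ m) (hn : 1 ≤ n) (C : ℕ → Fin 3 → ℕ × Bool)
    (X : ℕ → Bool) (hX : Sat n C X) : ¬ HEF (PPhi m n C) := by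
  intro hHEF
  have helem : Elementary (PPhi m n C) (EA m n X) :=
    cycle_elementary _ (n+2+m) (by omega) (eA n X) _ (mem_EA m n X)
      (fun k hk => forward_edges m n hm hn C X hX k hk)
  have hle := hHEF ⟨{Atom.phi}, ∅, {Atom.c 0, Atom.c (n+1)}⟩
    (Set.mem_union_left _ (Set.mem_union_left _ (by simp))) (EA m n X) helem
  have h0 : Atom.c 0 ∈ EA m n X := (mem_EA _ _ _ _).2 ⟨0, by omega, by simp [eA]⟩
  have h1 : Atom.c (n+1) ∈ EA m n X :=
    (mem_EA _ _ _ _).2 ⟨n+1, by omega, by rw [eA, if_pos le_rfl]⟩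
  have hsub : ({Atom.c 0, Atom.c (n+1)} : Finset Atom) ⊆
      EA m n X ∩ {Atom.c 0, Atom.c (n+1)} := by
    intro x hx
    rw [Finset.mem_inter]
    refine ⟨?_, hx⟩
    simp only [Finset.mem_insert, Finset.mem_singleton] at hx
    rcases hx with rfl | rfl
    · exact h0
    · exact h1
  have hcard : 2 ≤ (EA m n X ∩ {Atom.c 0, Atom.c (n+1)}).card := by
    have h2 : ({Atom.c 0, Atom.c (n+1)} : Finset Atom).card = 2 := by
      rw [Finset.card_insert_of_notMem (by simp), Finset.card_singleton]
    rw [← h2]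
    exact Finset.card_le_card hsub
  simp only [Rule.H] at hle
  omega

def pjB (j : ℕ) : Atom → Bool
  | Atom.phi => false
  | Atom.a k => j < k
  | Atom.na k => j < k
  | Atom.c k => k == 0

def qiB (i : ℕ) : Atom → Bool
  | Atom.phi => false
  | Atom.a _ => true
  | Atom.na _ => true
  | Atom.c k => i < k

lemma avar_mem (m n : ℕ) (C : ℕ → Fin 3 → ℕ × Bool) (E : Finset Atom)
    (hEl : Elementary (PPhi m n C) E) (hc0 : Atom.c 0 ∈ E) (hcn : Atom.c (n+1) ∈ E)
    (j : ℕ) (hj1 : 1 ≤ j) (hjm : j ≤ m) : Atom.a j ∈ E ∨ Atom.na j ∈ E := by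
  classical
  set Z : Finset Atom := E.filter (fun x => pjB j x) with hZdef
  have hZsub : Z ⊆ E := Finset.filter_subset _ _
  have hcnZ : Atom.c (n+1) ∉ Z := by simp [hZdef, pjB.eq_1, pjB.eq_2, pjB.eq_3, pjB.eq_4]
  have hZss : Z ⊂ E := ⟨hZsub, fun h => hcnZ (h hcn)⟩
  have hZne : Z.Nonempty := ⟨Atom.c 0, by simp [hZdef, pjB.eq_1, pjB.eq_2, pjB.eq_3, pjB.eq_4, hc0]⟩
  obtain ⟨r, hr, ⟨x, hx⟩, ⟨y, hy⟩, hBZ, hHEZ⟩ := hEl.2 Z hZss hZne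
  rw [Finset.mem_inter] at hx
  rw [Finset.mem_inter, Finset.mem_sdiff] at hy
  obtain ⟨hxH, hxZ⟩ := hx
  obtain ⟨hyB, hyE, hyZ⟩ := hy
  rcases hr with (hr | hr) | hr
  · simp only [Set.mem_insert_iff, Set.mem_singleton_iff] at hr
    rcases hr with rfl | rfl | rfl | rfl | rfl
    · -- rule 1: H ∩ (E \ Z) = ∅ contradicted by c (n+1)
      exact absurd hHEZ (by
        rw [Finset.eq_empty_iff_forall_notMem]
        intro h
        exact h (Atom.c (n+1)) (by
          rw [Finset.mem_inter, Finset.mem_sdiff]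
          exact ⟨by simp, hcn, hcnZ⟩))
    · -- rule 2: c 1 ∈ Z impossible
      simp only [Rule.H, Finset.mem_singleton] at hxH
      subst hxH
      simp [hZdef, pjB.eq_1, pjB.eq_2, pjB.eq_3, pjB.eq_4] at hxZ
    · -- rule 3: a 1 ∈ Z needs j < 1
      simp only [Rule.H, Finset.mem_singleton] at hxH
      subst hxH
      simp [hZdef, pjB.eq_1, pjB.eq_2, pjB.eq_3, pjB.eq_4] at hxZ
      omega
    · -- rule 4
      simp only [Rule.H, Finset.mem_singleton] at hxH
      subst hxH
      simp [hZdef, pjB.eq_1, pjB.eq_2, pjB.eq_3, pjB.eq_4] at hxZ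
      omega
    · -- rule 5: y ∈ {a m, na m} ∩ (E \ Z)
      simp only [Rule.B, Finset.mem_insert, Finset.mem_singleton] at hyB
      rcases hyB with rfl | rfl
      · have : ¬ (j < m) := by
          intro h
          exact hyZ (by simp [hZdef, pjB.eq_1, pjB.eq_2, pjB.eq_3, pjB.eq_4, hyE, h])
        have : j = m := by omega
        exact Or.inl (this ▸ hyE)
      · have : ¬ (j < m) := by
          intro h
          exact hyZ (by simp [hZdef, pjB.eq_1, pjB.eq_2, pjB.eq_3, pjB.eq_4, hyE, h])
        have : j = m := by omega
        exact Or.inr (this ▸ hyE)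
  · -- clause rules: head c (i+1) ∈ Z impossible
    obtain ⟨i, hi, α, hα, rfl⟩ := hr
    simp only [Rule.H, Finset.mem_singleton] at hxH
    subst hxH
    simp [hZdef, pjB.eq_1, pjB.eq_2, pjB.eq_3, pjB.eq_4] at hxZ
  · -- chain rules
    obtain ⟨i, hi, hcase⟩ := hr
    rw [Finset.mem_Icc] at hi
    rcases hcase with rfl | rfl | rfl | rfl <;>
      simp only [Rule.H, Rule.B, Finset.mem_singleton, Finset.mem_insert] at hxH hyB <;>
      subst hxH <;>
      simp only [hZdef, Finset.mem_filter, pjB.eq_1, pjB.eq_2, pjB.eq_3, pjB.eq_4, decide_eq_true_eq] at hxZ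
    · rcases hyB with rfl | rfl
      · have hij : ¬ (j < i) := fun h => hyZ (by simp [hZdef, pjB.eq_1, pjB.eq_2, pjB.eq_3, pjB.eq_4, hyE, h])
        have : i = j := by omega
        exact Or.inl (this ▸ hyE)
      · exact absurd (by simp [hZdef, pjB.eq_1, pjB.eq_2, pjB.eq_3, pjB.eq_4, hyE]; omega) hyZ
    · rcases hyB with rfl | rfl
      · have hij : ¬ (j < i) := fun h => hyZ (by simp [hZdef, pjB.eq_1, pjB.eq_2, pjB.eq_3, pjB.eq_4, hyE, h])
        have : i = j := by omega
        exact Or.inl (this ▸ hyE)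
      · exact absurd (by simp [hZdef, pjB.eq_1, pjB.eq_2, pjB.eq_3, pjB.eq_4, hyE]; omega) hyZ
    · rcases hyB with rfl | rfl
      · have hij : ¬ (j < i) := fun h => hyZ (by simp [hZdef, pjB.eq_1, pjB.eq_2, pjB.eq_3, pjB.eq_4, hyE, h])
        have : i = j := by omega
        exact Or.inr (this ▸ hyE)
      · exact absurd (by simp [hZdef, pjB.eq_1, pjB.eq_2, pjB.eq_3, pjB.eq_4, hyE]; omega) hyZ
    · rcases hyB with rfl | rfl
      · have hij : ¬ (j < i) := fun h => hyZ (by simp [hZdef, pjB.eq_1, pjB.eq_2, pjB.eq_3, pjB.eq_4, hyE, h])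
        have : i = j := by omega
        exact Or.inr (this ▸ hyE)
      · exact absurd (by simp [hZdef, pjB.eq_1, pjB.eq_2, pjB.eq_3, pjB.eq_4, hyE]; omega) hyZ


lemma clause_wit (m n : ℕ) (hn : 1 ≤ n) (C : ℕ → Fin 3 → ℕ × Bool) (E : Finset Atom)
    (hEl : Elementary (PPhi m n C) E) (hc0 : Atom.c 0 ∈ E) (hcn : Atom.c (n+1) ∈ E)
    (i : ℕ) (hi1 : 1 ≤ i) (hin : i ≤ n) : ∃ α ∈ NV C i, α ∉ E := by
  classical
  set Z : Finset Atom := E.filter (fun x => qiB i x) with hZdef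
  have hZsub : Z ⊆ E := Finset.filter_subset _ _
  have hc0Z : Atom.c 0 ∉ Z := by simp [hZdef, qiB.eq_1, qiB.eq_2, qiB.eq_3, qiB.eq_4]
  have hcnZ : Atom.c (n+1) ∈ Z := by
    simp only [hZdef, Finset.mem_filter]
    exact ⟨hcn, by simp [qiB.eq_1, qiB.eq_2, qiB.eq_3, qiB.eq_4]; omega⟩
  have hZss : Z ⊂ E := ⟨hZsub, fun h => hc0Z (h hc0)⟩
  have hZne : Z.Nonempty := ⟨Atom.c (n+1), hcnZ⟩
  obtain ⟨r, hr, ⟨x, hx⟩, ⟨y, hy⟩, hBZ, hHEZ⟩ := hEl.2 Z hZss hZne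
  rw [Finset.mem_inter] at hx
  rw [Finset.mem_inter, Finset.mem_sdiff] at hy
  obtain ⟨hxH, hxZ⟩ := hx
  obtain ⟨hyB, hyE, hyZ⟩ := hy
  have hBZ' : ∀ u ∈ r.B, u ∉ Z := by
    intro u hu huZ
    rw [Finset.eq_empty_iff_forall_notMem] at hBZ
    exact hBZ u (Finset.mem_inter.2 ⟨hu, huZ⟩)
  rcases hr with (hr | hr) | hr
  · simp only [Set.mem_insert_iff, Set.mem_singleton_iff] at hr
    rcases hr with rfl | rfl | rfl | rfl | rfl
    · -- rule 1: c 0 ∈ H ∩ (E \ Z)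
      exact absurd hHEZ (by
        rw [Finset.eq_empty_iff_forall_notMem]
        intro h
        exact h (Atom.c 0) (by
          rw [Finset.mem_inter, Finset.mem_sdiff]
          exact ⟨by simp, hc0, hc0Z⟩))
    · -- rule 2: c 1 ∈ Z needs i < 1
      simp only [Rule.H, Finset.mem_singleton] at hxH
      subst hxH
      simp [hZdef, qiB.eq_1, qiB.eq_2, qiB.eq_3, qiB.eq_4] at hxZ
      omega
    · -- rule 3: c (n+1) ∈ B ∩ Z
      exact absurd hcnZ (hBZ' (Atom.c (n+1)) (by simp))
    · exact absurd hcnZ (hBZ' (Atom.c (n+1)) (by simp))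
    · -- rule 5: head c 0 ∉ Z
      simp only [Rule.H, Finset.mem_singleton] at hxH
      subst hxH
      exact absurd hxZ hc0Z
  · -- clause rules: this is the real case
    obtain ⟨k, hk, α, hα, rfl⟩ := hr
    rw [Finset.mem_Icc] at hk
    simp only [Rule.H, Finset.mem_singleton] at hxH
    subst hxH
    -- hxZ : c (k+1) ∈ Z so i < k+1, i.e. k ≥ i
    have hki : i ≤ k := by
      simp [hZdef, qiB.eq_1, qiB.eq_2, qiB.eq_3, qiB.eq_4] at hxZ
      omega
    -- α is an a/na atom
    have hαlit : ∃ v b, α = litAtom (v, b) := by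
      simp only [NV, Finset.mem_insert, Finset.mem_singleton] at hα
      rcases hα with rfl | rfl | rfl <;>
        exact ⟨_, _, oppAtom_eq _⟩
    obtain ⟨v, b, rfl⟩ := hαlit
    -- y ∈ {c k, litAtom (v,b)} ∩ (E \ Z): the lit is in Z if in E, so y = c k and k ≤ i
    have hlitZ : litAtom (v, b) ∈ E → litAtom (v, b) ∈ Z := by
      intro h
      simp only [hZdef, Finset.mem_filter]
      exact ⟨h, by cases b <;> simp [litAtom, qiB.eq_1, qiB.eq_2, qiB.eq_3, qiB.eq_4]⟩
    simp only [Rule.B, Finset.mem_insert, Finset.mem_singleton] at hyB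
    rcases hyB with rfl | rfl
    · -- y = c k, so ¬ (i < k), hence k = i
      have : ¬ (i < k) := by
        intro h
        exact hyZ (by simp only [hZdef, Finset.mem_filter]; exact ⟨hyE, by simp [qiB.eq_1, qiB.eq_2, qiB.eq_3, qiB.eq_4]; omega⟩)
      have hik : k = i := by omega
      subst hik
      refine ⟨litAtom (v, b), hα, ?_⟩
      intro hmem
      exact hBZ' (litAtom (v, b)) (by simp) (hlitZ hmem)
    · exact absurd (hlitZ hyE) hyZ
  · -- chain rules: body ⊆ a/na atoms, all in Z if in E
    obtain ⟨k, hk, hcase⟩ := hr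
    have : y ∈ Z := by
      rcases hcase with rfl | rfl | rfl | rfl <;>
        simp only [Rule.B, Finset.mem_insert, Finset.mem_singleton] at hyB <;>
        rcases hyB with rfl | rfl <;>
        · simp only [hZdef, Finset.mem_filter]
          exact ⟨hyE, by simp [qiB.eq_1, qiB.eq_2, qiB.eq_3, qiB.eq_4]⟩
    exact absurd this hyZ

theorem stmt14 (m n : ℕ) (hm : 1 ≤ m) (hn : 1 ≤ n)
    (C : ℕ → Fin 3 → ℕ × Bool) (hC : ValidCNF m n C) :
    (∃ X : ℕ → Bool, Sat n C X) ↔ ¬ HEF (PPhi m n C) := by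
  classical
  constructor
  · rintro ⟨X, hX⟩
    exact sat_not_HEF m n hm hn C X hX
  · intro hnH
    rw [HEF] at hnH
    push_neg at hnH
    obtain ⟨r, hrP, E, hEl, hcard⟩ := hnH
    have hsing : ∀ h : Atom, r.H = {h} → False := by
      intro h hH
      rw [hH] at hcard
      have hle : (E ∩ ({h} : Finset Atom)).card ≤ ({h} : Finset Atom).card :=
        Finset.card_le_card Finset.inter_subset_right
      rw [Finset.card_singleton] at hle
      omega
    have hrule1 : r = ⟨{Atom.phi}, ∅, {Atom.c 0, Atom.c (n+1)}⟩ := by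
      rcases hrP with (hr | hr) | hr
      · simp only [Set.mem_insert_iff, Set.mem_singleton_iff] at hr
        rcases hr with rfl | rfl | rfl | rfl | rfl
        · rfl
        · exact absurd rfl (fun h => hsing _ h)
        · exact absurd rfl (fun h => hsing _ h)
        · exact absurd rfl (fun h => hsing _ h)
        · exact absurd rfl (fun h => hsing _ h)
      · obtain ⟨i, hi, α, hα, rfl⟩ := hr
        exact absurd rfl (fun h => hsing _ h)
      · obtain ⟨i, hi, hcase⟩ := hr
        rcases hcase with rfl | rfl | rfl | rfl <;>
          exact absurd rfl (fun h => hsing _ h)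
    subst hrule1
    simp only [Rule.H] at hcard
    have hc0 : Atom.c 0 ∈ E := by
      by_contra h
      have hsub : E ∩ ({Atom.c 0, Atom.c (n+1)} : Finset Atom) ⊆ {Atom.c (n+1)} := by
        intro x hx
        rw [Finset.mem_inter] at hx
        simp only [Finset.mem_insert, Finset.mem_singleton] at hx ⊢
        rcases hx.2 with rfl | rfl
        · exact absurd hx.1 h
        · rfl
      have := Finset.card_le_card hsub
      rw [Finset.card_singleton] at this
      omega
    have hcn : Atom.c (n+1) ∈ E := by
      by_contra h
      have hsub : E ∩ ({Atom.c 0, Atom.c (n+1)} : Finset Atom) ⊆ {Atom.c 0} := by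
        intro x hx
        rw [Finset.mem_inter] at hx
        simp only [Finset.mem_insert, Finset.mem_singleton] at hx ⊢
        rcases hx.2 with rfl | rfl
        · rfl
        · exact absurd hx.1 h
      have := Finset.card_le_card hsub
      rw [Finset.card_singleton] at this
      omega
    refine ⟨fun v => decide (Atom.a v ∈ E), ?_⟩
    intro i hi
    rw [Finset.mem_Icc] at hi
    obtain ⟨α, hαNV, hαE⟩ := clause_wit m n hn C E hEl hc0 hcn i hi.1 hi.2
    have key : ∀ j : Fin 3, oppAtom (C i j) = α →
        decide (Atom.a (C i j).1 ∈ E) = (C i j).2 := by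
      intro j hj
      have hv := hC i (by rw [Finset.mem_Icc]; exact hi) j
      rw [Finset.mem_Icc] at hv
      rcases hCv : C i j with ⟨v, b⟩
      rw [hCv] at hj hv
      cases b
      · -- α = a v ∉ E
        simp only [oppAtom] at hj
        rw [← hj] at hαE
        simp [hαE]
      · -- α = na v ∉ E ⇒ a v ∈ E
        simp only [oppAtom] at hj
        rw [← hj] at hαE
        have := avar_mem m n C E hEl hc0 hcn v hv.1 hv.2
        rcases this with h | h
        · simp [h]
        · exact absurd h hαE
    simp only [NV, Finset.mem_insert, Finset.mem_singleton] at hαNV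
    rcases hαNV with h | h | h
    · exact ⟨0, key 0 h.symm⟩
    · exact ⟨1, key 1 h.symm⟩
    · exact ⟨2, key 2 h.symm⟩
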